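/- If y ∈ {0,1}^ℕ is a computable sequence with infinitely many 1's, then for every x that is Martin-Löf random with respect to the uniform measure, the selected subsequence x/y is also Martin-Löf random with respect to the uniform measure. -/

import Mathlib

open MeasureTheory Filter

/-- Cylinder set of infinite binary sequences extending the finite string `s`. -/
def cyl (s : List Bool) : Set (ℕ → Bool) := {x | ∀ i : Fin s.length, x i.val = s.get i}

/-- The length-`n` prefix of the infinite sequence `y`. -/
def pre (y : ℕ → Bool) (n : ℕ) : List Bool := List.ofFn (fun i : Fin n => y i.val)

/-- `select x y` is the subsequence `x/y` of `x` at positions `i` with `y i = true`. -/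
noncomputable def select (x y : ℕ → Bool) : ℕ → Bool :=
  fun n => x (Nat.nth (fun i => y i = true) n)

/-- Subsequence of a finite string `s` at the positions where `t` is `true`. -/
def selStr (s t : List Bool) : List Bool :=
  ((List.zip s t).filter (fun p => p.2)).map Prod.fst

/-- `s` is a prefix of the infinite sequence `f`. -/
def IsPrefixSeq (s : List Bool) (f : ℕ → Bool) : Prop :=
  ∀ i : Fin s.length, f i.val = s.get i

/-- Open set determined by level `n` of a test. -/
def openU (U : ℕ → Set (List Bool)) (n : ℕ) : Set (ℕ → Bool) := ⋃ s ∈ U n, cyl s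

/-- Martin-Löf test with respect to the measure `μ`. -/
def MLTest (μ : Measure (ℕ → Bool)) (U : ℕ → Set (List Bool)) : Prop :=
  REPred (fun p : ℕ × List Bool => p.2 ∈ U p.1) ∧
  (∀ n, openU U (n + 1) ⊆ openU U n) ∧
  (∀ n, μ (openU U n) < (2 : ENNReal)⁻¹ ^ n)

/-- `x` is Martin-Löf random w.r.t. `μ`: it passes every ML test. -/
def MLRandom (μ : Measure (ℕ → Bool)) (x : ℕ → Bool) : Prop :=
  ∀ U : ℕ → Set (List Bool), MLTest μ U → ∃ n, x ∉ openU U n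

/-- `μ` is a computable measure. -/
def ComputableMeasure (μ : Measure (ℕ → Bool)) : Prop :=
  ∃ A : List Bool → ℕ → ℚ, Computable₂ A ∧
    ∀ s k, |(μ (cyl s)).toReal - (A s k : ℝ)| < 1 / (k + 1)

/-- The uniform (fair-coin) measure, characterized on cylinders. -/
def IsUniform (μ : Measure (ℕ → Bool)) : Prop :=
  ∀ s : List Bool, μ (cyl s) = (2 : ENNReal)⁻¹ ^ s.length

/-- If `y` is a computable sequence with infinitely many 1's, then
selection by `y` preserves ML-randomness w.r.t. the uniform measure: for every
`x ∈ R`, also `x/y ∈ R`. -/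
-- auxiliary lemmas
lemma pre_length (f : ℕ → Bool) (n : ℕ) : (pre f n).length = n := by simp [pre]

lemma pre_get (f : ℕ → Bool) (n : ℕ) (i : Fin (pre f n).length) : (pre f n).get i = f i.val := by
  exact List.get_ofFn (fun i : Fin n => f i.val) i

lemma mem_cyl_pre (f : ℕ → Bool) (n : ℕ) : f ∈ cyl (pre f n) := by
  intro i; rw [pre_get]

lemma pre_eq_of_mem_cyl {x : ℕ → Bool} {t : List Bool} (h : x ∈ cyl t) : pre x t.length = t := by
  apply List.ext_getElem (by simp [pre])
  intro n h1 h2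
  have := h ⟨n, h2⟩
  simpa [pre, List.get_eq_getElem] using this

lemma pre_succ (f : ℕ → Bool) (n : ℕ) : pre f (n + 1) = pre f n ++ [f n] := by
  rw [pre, List.ofFn_succ', List.concat_eq_append]
  simp [pre]

-- measurability
lemma measurableSet_coord (i : ℕ) (b : Bool) : MeasurableSet {x : ℕ → Bool | x i = b} := by
  have : {x : ℕ → Bool | x i = b} = (fun x : ℕ → Bool => x i) ⁻¹' {b} := rfl
  rw [this]
  exact measurable_pi_apply i (measurableSet_singleton b)

lemma measurableSet_cyl (s : List Bool) : MeasurableSet (cyl s) := by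
  have : cyl s = ⋂ i : Fin s.length, {x : ℕ → Bool | x i.val = s.get i} := by
    ext x; simp [cyl]
  rw [this]
  exact MeasurableSet.iInter fun i => measurableSet_coord _ _

def constrSet (F : Finset ℕ) (v : ℕ → Bool) : Set (ℕ → Bool) := {x | ∀ i ∈ F, x i = v i}

lemma measurableSet_constrSet (F : Finset ℕ) (v : ℕ → Bool) : MeasurableSet (constrSet F v) := by
  have : constrSet F v = ⋂ i ∈ F, {x : ℕ → Bool | x i = v i} := by
    ext x; simp [constrSet]
  rw [this]
  exact MeasurableSet.biInter F.countable_toSet fun i _ => measurableSet_coord _ _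


lemma meas_constr_aux {μ : Measure (ℕ → Bool)} (hμ : IsUniform μ) :
    ∀ (k N : ℕ) (F : Finset ℕ) (v : ℕ → Bool), F ⊆ Finset.range N → N = F.card + k →
      μ (constrSet F v) = (2 : ENNReal)⁻¹ ^ F.card := by
  intro k
  induction k with
  | zero =>
    intro N F v hFN hN
    have hF : F = Finset.range N := by
      apply Finset.eq_of_subset_of_card_le hFN
      simp [hN]
    have hset : constrSet F v = cyl (List.ofFn fun i : Fin N => v i.val) := by
      ext x
      simp only [constrSet, cyl, Set.mem_setOf_eq, hF, Finset.mem_range]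
      constructor
      · intro h i
        have hi : (i : ℕ) < N := by simpa using i.isLt
        simp only [List.get_eq_getElem, List.getElem_ofFn]
        exact h _ hi
      · intro h i hi
        have := h ⟨i, by simpa using hi⟩
        simpa using this
    rw [hset, hμ, List.length_ofFn, hF, Finset.card_range]
  | succ k ih =>
    intro N F v hFN hN
    have hex : ∃ j ∈ Finset.range N, j ∉ F := by
      by_contra hc
      push_neg at hc
      have : Finset.range N ⊆ F := fun j hj => hc j hj
      have := Finset.card_le_card this
      simp [Finset.card_range] at this
      omega
    obtain ⟨j, hjN, hjF⟩ := hex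
    have hsub : insert j F ⊆ Finset.range N := Finset.insert_subset hjN hFN
    have hcard : (insert j F).card = F.card + 1 := Finset.card_insert_of_notMem hjF
    have h1 := ih N (insert j F) (Function.update v j true) hsub (by omega)
    have h2 := ih N (insert j F) (Function.update v j false) hsub (by omega)
    have hsplit : constrSet F v =
        constrSet (insert j F) (Function.update v j true) ∪
        constrSet (insert j F) (Function.update v j false) := by
      ext x
      simp only [constrSet, Set.mem_setOf_eq, Set.mem_union, Finset.mem_insert]
      constructor
      · intro h
        cases hxj : x j with
        | true =>
          left
          rintro i (rfl | hi)
          · simp [hxj]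
          · rw [Function.update_of_ne (by rintro rfl; exact hjF hi)]
            exact h i hi
        | false =>
          right
          rintro i (rfl | hi)
          · simp [hxj]
          · rw [Function.update_of_ne (by rintro rfl; exact hjF hi)]
            exact h i hi
      · rintro (h | h) <;>
        · intro i hi
          have := h i (Or.inr hi)
          rwa [Function.update_of_ne (by rintro rfl; exact hjF hi)] at this
    have hdisj : Disjoint (constrSet (insert j F) (Function.update v j true))
        (constrSet (insert j F) (Function.update v j false)) := by
      rw [Set.disjoint_left]
      intro x h1 h2
      have e1 := h1 j (Finset.mem_insert_self j F)
      have e2 := h2 j (Finset.mem_insert_self j F)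
      simp at e1 e2
      rw [e1] at e2
      exact Bool.true_eq_false ▸ e2
    rw [hsplit, measure_union hdisj (measurableSet_constrSet _ _), h1, h2, hcard]
    rw [pow_succ, ← mul_add, ENNReal.inv_two_add_inv_two, mul_one]

lemma meas_constr {μ : Measure (ℕ → Bool)} (hμ : IsUniform μ) (F : Finset ℕ) (v : ℕ → Bool) :
    μ (constrSet F v) = (2 : ENNReal)⁻¹ ^ F.card := by
  obtain ⟨N, hN⟩ := F.exists_nat_subset_range
  have hle : F.card ≤ N := by
    simpa using Finset.card_le_card hN
  exact meas_constr_aux hμ (N - F.card) N F v hN (by omega)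

-- cylinders generate the σ-algebra and form a π-system
def cylSets : Set (Set (ℕ → Bool)) := Set.range cyl

lemma cyl_subset_of_le {s t : List Bool} (h : s.length ≤ t.length) (x : ℕ → Bool)
    (hxs : x ∈ cyl s) (hxt : x ∈ cyl t) : cyl t ⊆ cyl s := by
  intro z hz i
  have hi : (i : ℕ) < t.length := lt_of_lt_of_le i.isLt h
  have : s.get i = t.get ⟨i, hi⟩ := by rw [← hxs i, ← hxt ⟨i, hi⟩]
  rw [this]
  exact hz ⟨i, hi⟩

lemma isPiSystem_cylSets : IsPiSystem cylSets := by
  rintro _ ⟨s, rfl⟩ _ ⟨t, rfl⟩ hne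
  obtain ⟨x, hxs, hxt⟩ := hne
  rcases le_total s.length t.length with h | h
  · exact ⟨t, (Set.inter_eq_self_of_subset_right (cyl_subset_of_le h x hxs hxt)).symm⟩
  · refine ⟨s, ?_⟩
    rw [Set.inter_comm, Set.inter_eq_self_of_subset_right (cyl_subset_of_le h x hxt hxs)]

lemma coord_eq_union (i : ℕ) (b : Bool) :
    {x : ℕ → Bool | x i = b} =
      ⋃ t ∈ {t : List Bool | ∃ h : i < t.length, t.get ⟨i, h⟩ = b}, cyl t := by
  ext x
  simp only [Set.mem_setOf_eq, Set.mem_iUnion, exists_prop]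
  constructor
  · intro hx
    refine ⟨pre x (i + 1), ⟨?_, ?_⟩, mem_cyl_pre x (i + 1)⟩
    · rw [pre_length]; omega
    · rw [pre_get]; exact hx
  · rintro ⟨t, ⟨h, hb⟩, hx⟩
    have := hx ⟨i, h⟩
    rw [this, hb]

lemma generateFrom_cylSets :
    (inferInstance : MeasurableSpace (ℕ → Bool)) = MeasurableSpace.generateFrom cylSets := by
  refine le_antisymm ?_ (MeasurableSpace.generateFrom_le ?_)
  · show (MeasurableSpace.pi : MeasurableSpace (ℕ → Bool)) ≤ MeasurableSpace.generateFrom cylSets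
    refine iSup_le fun i => ?_
    rw [MeasurableSpace.comap_le_iff_le_map]
    intro sb _
    show MeasurableSet[MeasurableSpace.generateFrom cylSets] ((fun x : ℕ → Bool => x i) ⁻¹' sb)
    have hsb : (fun x : ℕ → Bool => x i) ⁻¹' sb = ⋃ b ∈ sb, {x : ℕ → Bool | x i = b} := by
      ext x; simp
    rw [hsb]
    refine MeasurableSet.biUnion (Set.to_countable _) fun b _ => ?_
    rw [coord_eq_union]
    exact MeasurableSet.biUnion (Set.to_countable _)
      fun t _ => MeasurableSpace.measurableSet_generateFrom ⟨t, rfl⟩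
  · rintro _ ⟨s, rfl⟩
    exact measurableSet_cyl s

lemma measurable_select (y : ℕ → Bool) : Measurable fun x : ℕ → Bool => select x y := by
  apply measurable_pi_iff.mpr
  intro n
  exact measurable_pi_apply _

lemma select_preimage_cyl (y : ℕ → Bool) (hyinf : {i | y i = true}.Infinite) (s : List Bool) :
    (fun x => select x y) ⁻¹' cyl s =
      constrSet ((Finset.range s.length).image (Nat.nth fun i => y i = true))
        (fun j => s.getD (Nat.count (fun i => y i = true) j) false) := by
  have hyinf' : (setOf fun i => y i = true).Infinite := hyinf
  ext x
  simp only [Set.mem_preimage, cyl, Set.mem_setOf_eq, constrSet, Finset.mem_image,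
    Finset.mem_range]
  constructor
  · intro h j
    rintro ⟨i, hi, rfl⟩
    have hc : Nat.count (fun i => y i = true) (Nat.nth (fun i => y i = true) i) = i :=
      Nat.count_nth_of_infinite hyinf' i
    rw [hc, List.getD_eq_getElem s false hi]
    exact h ⟨i, hi⟩
  · intro h i
    have := h (Nat.nth (fun k => y k = true) i) ⟨i, i.isLt, rfl⟩
    rw [Nat.count_nth_of_infinite hyinf' i, List.getD_eq_getElem s false i.isLt] at this
    exact this

lemma map_select {μ : Measure (ℕ → Bool)} [IsProbabilityMeasure μ] (hμ : IsUniform μ)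
    (y : ℕ → Bool) (hyinf : {i | y i = true}.Infinite) :
    Measure.map (fun x => select x y) μ = μ := by
  haveI : IsProbabilityMeasure (Measure.map (fun x => select x y) μ) :=
    Measure.isProbabilityMeasure_map (measurable_select y).aemeasurable
  refine ext_of_generate_finite cylSets generateFrom_cylSets isPiSystem_cylSets ?_ ?_
  · rintro _ ⟨s, rfl⟩
    rw [Measure.map_apply (measurable_select y) (measurableSet_cyl s),
      select_preimage_cyl y hyinf s, meas_constr hμ, hμ s,
      Finset.card_image_of_injective _ (Nat.nth_injective hyinf), Finset.card_range]
  · simp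






-- recursive selection
def selN (y x : ℕ → Bool) : ℕ → List Bool :=
  fun N => Nat.rec [] (fun k IH => IH ++ (cond (y k) [x k] [])) N

lemma selN_succ (y x : ℕ → Bool) (N : ℕ) :
    selN y x (N + 1) = selN y x N ++ (cond (y N) [x N] []) := rfl

lemma selN_congr (y : ℕ → Bool) {x x' : ℕ → Bool} (N : ℕ) (h : ∀ k < N, x k = x' k) :
    selN y x N = selN y x' N := by
  induction N with
  | zero => rfl
  | succ N ih =>
    rw [selN_succ, selN_succ, ih (fun k hk => h k (hk.trans (Nat.lt_succ_self N))),
      h N (Nat.lt_succ_self N)]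

lemma selN_eq_pre (y x : ℕ → Bool) (N : ℕ) :
    selN y x N = pre (select x y) (Nat.count (fun i => y i = true) N) := by
  induction N with
  | zero => rfl
  | succ N ih =>
    rw [selN_succ, ih, Nat.count_succ]
    cases hyN : y N with
    | false => simp [hyN]
    | true =>
      have hsel : select x y (Nat.count (fun i => y i = true) N) = x N := by
        unfold select
        rw [Nat.nth_count hyN]
      simp only [hyN, cond_true, if_true]
      rw [pre_succ, hsel]

def selB (y : ℕ → Bool) (t : List Bool) : List Bool :=
  selN y (fun k => t.getD k false) t.length

lemma selB_pre (y x : ℕ → Bool) (N : ℕ) :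
    selB y (pre x N) = pre (select x y) (Nat.count (fun i => y i = true) N) := by
  unfold selB
  rw [pre_length]
  rw [selN_congr y N (x' := x) ?_, selN_eq_pre]
  intro k hk
  rw [List.getD_eq_getElem _ false (by rwa [pre_length])]
  simp [pre]

-- the pulled-back test
lemma openU_pullback {U : ℕ → Set (List Bool)} (y : ℕ → Bool)
    (hyinf : {i | y i = true}.Infinite) (n : ℕ) :
    openU (fun n => {t : List Bool | selB y t ∈ U n}) n =
      (fun x => select x y) ⁻¹' openU U n := by
  have hyinf' : (setOf fun i => y i = true).Infinite := hyinf
  ext x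
  simp only [openU, Set.mem_preimage, Set.mem_iUnion, Set.mem_setOf_eq, exists_prop]
  constructor
  · rintro ⟨t, ht, hx⟩
    have hpre : pre x t.length = t := pre_eq_of_mem_cyl hx
    rw [← hpre, selB_pre] at ht
    exact ⟨_, ht, mem_cyl_pre _ _⟩
  · rintro ⟨s, hs, hx⟩
    refine ⟨pre x (Nat.nth (fun i => y i = true) s.length), ?_, mem_cyl_pre _ _⟩
    show selB y _ ∈ U n
    rw [selB_pre, Nat.count_nth_of_infinite hyinf' s.length]
    rwa [pre_eq_of_mem_cyl hx]

lemma computable_selB {y : ℕ → Bool} (hycomp : Computable y) : Computable (selB y) := by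
  have hgetD : Computable₂ fun (t : List Bool) (n : ℕ) => t.getD n false := by
    have h := Computable.option_getD (α := List Bool × ℕ)
      (f := fun p => p.1[p.2]?) (g := fun _ => false)
      (Computable.list_getElem?.comp Computable.fst Computable.snd) (Computable.const false)
    exact h.of_eq fun p => by simp [List.getD_eq_getElem?_getD]
  have hh : Computable₂ (fun (t : List Bool) (p : ℕ × List Bool) =>
      p.2 ++ cond (y p.1) [t.getD p.1 false] ([] : List Bool)) :=
    Computable.list_append.comp (Computable.snd.comp Computable.snd)
      (Computable.cond (hycomp.comp (Computable.fst.comp Computable.snd))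
        (Computable.list_cons.comp
          (hgetD.comp Computable.fst (Computable.fst.comp Computable.snd))
          (Computable.const []))
        (Computable.const []))
  have h := Computable.nat_rec (f := fun t : List Bool => t.length)
    (g := fun _ : List Bool => ([] : List Bool))
    (h := fun t p => p.2 ++ cond (y p.1) [t.getD p.1 false] ([] : List Bool))
    Computable.list_length (Computable.const []) hh
  exact h.of_eq fun t => rfl

theorem stmt5 (μ : Measure (ℕ → Bool)) [IsProbabilityMeasure μ] (hμ : IsUniform μ)
    (y : ℕ → Bool) (hycomp : Computable y) (hyinf : {i | y i = true}.Infinite)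
    (x : ℕ → Bool) (hx : MLRandom μ x) :
    MLRandom μ (select x y) := by
  intro U hU
  have hopen : ∀ n, openU (fun n => {t : List Bool | selB y t ∈ U n}) n =
      (fun x => select x y) ⁻¹' openU U n := fun n => openU_pullback y hyinf n
  have hmeasU : ∀ n, MeasurableSet (openU U n) := fun n =>
    MeasurableSet.biUnion (Set.to_countable _) fun s _ => measurableSet_cyl s
  have hmeas : ∀ n, μ (openU (fun n => {t : List Bool | selB y t ∈ U n}) n) = μ (openU U n) := by
    intro n
    rw [hopen n, ← Measure.map_apply (measurable_select y) (hmeasU n), map_select hμ y hyinf]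
  have hVtest : MLTest μ (fun n => {t : List Bool | selB y t ∈ U n}) := by
    refine ⟨?_, ?_, ?_⟩
    · have hg : Computable fun p : ℕ × List Bool => (p.1, selB y p.2) :=
        Computable.pair Computable.fst ((computable_selB hycomp).comp Computable.snd)
      exact hU.1.comp hg
    · intro n
      rw [hopen n, hopen (n + 1)]
      exact Set.preimage_mono (hU.2.1 n)
    · intro n
      rw [hmeas n]
      exact hU.2.2 n
  obtain ⟨n, hn⟩ := hx _ hVtest
  refine ⟨n, fun hmem => hn ?_⟩
  rw [hopen n]
  exact hmem
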